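/- Locality of algebra homomorphisms into Weil algebras: let M be a smooth manifold without boundary modeled on ℝ^n (finite-dimensional), Hausdorff and second countable, let A be a real Weil algebra, let ψ : C^∞(M) → A be a unital ℝ-algebra homomorphism, and let x ∈ M be a base point of ψ, i.e. ψ(f) − f(x)·1_A is nilpotent for every f ∈ C^∞(M). If s ∈ C^∞(M) vanishes identically on some neighborhood of x, then ψ(s) = 0. -/

import Mathlib

open scoped Manifold

/-- **Locality**: a unital `ℝ`-algebra homomorphism `ψ : C^∞(M) → A` into a real Weil
algebra with base point `x` (i.e. `ψ f - f x · 1` is nilpotent for all `f`) kills every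
smooth function vanishing identically on a neighborhood of `x`. -/
theorem algHom_apply_eq_zero_of_eventually_eq_zero {n : ℕ} {M : Type*} [TopologicalSpace M]
    [ChartedSpace (EuclideanSpace ℝ (Fin n)) M]
    [IsManifold (𝓡 n) (⊤ : ℕ∞) M] [T2Space M] [SecondCountableTopology M]
    (A : Type*) [CommRing A] [Algebra ℝ A] [Nontrivial A] [FiniteDimensional ℝ A]
    (hA : ∀ a : A, ∃ c : ℝ, IsNilpotent (a - algebraMap ℝ A c))
    (ψ : C^(⊤ : ℕ∞)⟮𝓡 n, M; ℝ⟯ →ₐ[ℝ] A) (x : M)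
    (hx : ∀ f : C^(⊤ : ℕ∞)⟮𝓡 n, M; ℝ⟯, IsNilpotent (ψ f - algebraMap ℝ A (f x)))
    (s : C^(⊤ : ℕ∞)⟮𝓡 n, M; ℝ⟯) (V : Set M) (hV : V ∈ nhds x)
    (hs : ∀ y ∈ V, s y = 0) :
    ψ s = 0 := by
  -- choose a smooth bump function supported in `V`
  obtain ⟨f, hfV, -⟩ := ((SmoothBumpFunction.nhds_basis_support (I := 𝓡 n) (c := x) hV).mem_iff).1 hV
  have hsupp : Function.support f ⊆ V := subset_closure.trans hfV
  set g : C^(⊤ : ℕ∞)⟮𝓡 n, M; ℝ⟯ := ⟨f, f.contMDiff⟩ with hg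
  -- `g * s = 0`
  have hgs : g * s = 0 := by
    ext y
    by_cases hy : y ∈ V
    · change f y * s y = 0
      simp [hg, hs y hy]
    · have : f y = 0 := by
        by_contra h
        exact hy (hsupp h)
      change f y * s y = 0
      simp [hg, this]
  have h0 : ψ g * ψ s = 0 := by
    rw [← map_mul, hgs, map_zero]
  -- `ψ g` is a unit since `g x = 1`
  have hgx : g x = 1 := f.eq_one
  have hnil : IsNilpotent (ψ g - 1) := by
    have := hx g
    rw [hgx] at this
    simpa using this
  have hunit : IsUnit (ψ g) := by
    have := hnil.isUnit_add_one
    simpa using this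
  obtain ⟨u, hu⟩ := hunit
  have : (u : A) * ψ s = 0 := hu ▸ h0
  calc ψ s = (↑u⁻¹ * u) * ψ s := by simp
    _ = ↑u⁻¹ * ((u : A) * ψ s) := by ring
    _ = 0 := by rw [this, mul_zero]
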